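/- Let n, d be integers with d ≥ 2 and let A be an n × n matrix with entries in {0,1} such that every row of A has exactly d ones and every column of A has exactly d ones. Let Γ_A be the simple graph on the column indices of A in which two distinct columns j, k are adjacent if and only if the number of rows i with A_{i,j} = A_{i,k} = 1 equals d − 1. Assume that Γ_A is connected and that for every row i of A, the subgraph of Γ_A induced by the support of row i is connected. Then Γ_A is not a tree. -/

import Mathlib

open Finset

/-- The graph `Γ_A` on the column indices of a 0/1-matrix `A` (encoded with `Bool` entries):
two distinct columns `j, k` are adjacent iff the number of rows `i` with
`A i j = A i k = 1` equals `d - 1`. -/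
def gammaA (n d : ℕ) (A : Fin n → Fin n → Bool) : SimpleGraph (Fin n) where
  Adj j k := j ≠ k ∧ (univ.filter (fun i => A i j ∧ A i k)).card = d - 1
  symm := by
    constructor
    rintro j k ⟨hjk, hcard⟩
    refine ⟨hjk.symm, ?_⟩
    rw [← hcard]
    congr 1
    ext i
    simp [and_comm]
  loopless := ⟨fun j h => h.1 rfl⟩

/-- A connected graph on a finite vertex type has at least `card V - 1` edges. -/
lemma aux_conn_card_le {V : Type*} [Fintype V] (G : SimpleGraph V) [Fintype G.edgeSet]
    (h : G.Connected) : Fintype.card V ≤ G.edgeFinset.card + 1 := by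
  classical
  have hne := h.nonempty
  inhabit V
  set v₀ : V := default with hv₀
  have hstep : ∀ w : V, ∃ u, w ≠ v₀ → G.Adj w u ∧ G.dist u v₀ < G.dist w v₀ := by
    intro w
    by_cases hw : w = v₀
    · exact ⟨w, fun h' => absurd hw h'⟩
    · obtain ⟨p, hp, hlen⟩ := h.exists_path_of_dist w v₀
      cases p with
      | nil => exact absurd rfl hw
      | @cons _ u _ ha q =>
        refine ⟨u, fun _ => ⟨ha, ?_⟩⟩
        have h1 : G.dist u v₀ ≤ q.length := G.dist_le q
        have h2 : q.length + 1 = G.dist w v₀ := by simpa using hlen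
        omega
  choose f hf using hstep
  have hcard : (({v₀} : Finset V)ᶜ).card ≤ G.edgeFinset.card := by
    refine Finset.card_le_card_of_injOn (fun w => Sym2.mk w (f w)) ?_ ?_
    · intro w hw
      simp only [Finset.coe_compl, Finset.coe_singleton, Set.mem_compl_iff,
        Set.mem_singleton_iff] at hw
      rw [Finset.mem_coe, SimpleGraph.mem_edgeFinset, SimpleGraph.mem_edgeSet]
      exact (hf w hw).1
    · intro w hw x hx hwx
      simp only [Finset.coe_compl, Finset.coe_singleton, Set.mem_compl_iff,
        Set.mem_singleton_iff] at hw hx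
      rw [Sym2.eq_iff] at hwx
      rcases hwx with h' | h'
      · exact h'.1
      · obtain ⟨h1, h2⟩ := h'
        have d1 := (hf w hw).2
        have d2 := (hf x hx).2
        rw [h2] at d1
        rw [← h1] at d2
        omega
  have : (({v₀} : Finset V)ᶜ).card = Fintype.card V - 1 := by
    simp [Finset.card_compl]
  have hpos : 0 < Fintype.card V := Fintype.card_pos
  omega

/-- If every row and every column of an `n × n` 0/1-matrix `A` has exactly `d ≥ 2` ones,
`Γ_A` is connected, and for every row the subgraph of `Γ_A` induced by the support of
that row is connected, then `Γ_A` is not a tree. -/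
theorem stmt6 (n d : ℕ) (hd : 2 ≤ d)
    (A : Fin n → Fin n → Bool)
    (hrow : ∀ i : Fin n, (univ.filter (fun j => A i j)).card = d)
    (hcol : ∀ j : Fin n, (univ.filter (fun i => A i j)).card = d)
    (hconn : (gammaA n d A).Connected)
    (hind : ∀ i : Fin n,
      ((gammaA n d A).induce ((univ.filter (fun j => A i j)) : Set (Fin n))).Connected) :
    ¬ (gammaA n d A).IsTree := by
  classical
  intro ht
  set G := gammaA n d A with hGdef
  obtain ⟨v⟩ := hconn.nonempty
  have hn : 0 < n := v.pos
  have hedge : G.edgeFinset.card + 1 = n := by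
    simpa using ht.card_edgeFinset
  set Q : Sym2 (Fin n) → Fin n → Prop := fun e i => ∀ v ∈ e, A i v = true with hQ
  -- each edge lies in exactly d - 1 row supports
  have claim1 : ∀ e ∈ G.edgeFinset, (univ.filter (fun i => Q e i)).card = d - 1 := by
    intro e he
    induction e with
    | _ j k =>
      rw [SimpleGraph.mem_edgeFinset, SimpleGraph.mem_edgeSet] at he
      obtain ⟨hjk, hcard⟩ : j ≠ k ∧ (univ.filter (fun i => A i j ∧ A i k)).card = d - 1 := he
      rw [← hcard]
      congr 1
      ext i
      simp [hQ, Sym2.mem_iff]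
  -- each row support contains at least d - 1 edges
  have claim2 : ∀ i : Fin n, d - 1 ≤ (G.edgeFinset.filter (fun e => Q e i)).card := by
    intro i
    set s : Finset (Fin n) := univ.filter (fun j => A i j) with hs
    have hcardV : Fintype.card ↥((s : Set (Fin n))) = d := by
      rw [← hrow i]
      exact Fintype.card_coe s
    have hle := aux_conn_card_le (G.induce (s : Set (Fin n))) (hind i)
    rw [hcardV] at hle
    have hinto : d - 1 ≤ (G.induce (s : Set (Fin n))).edgeFinset.card := by omega
    refine le_trans hinto ?_
    apply Finset.card_le_card_of_injOn (Sym2.map Subtype.val)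
    · intro e he
      induction e with
      | _ a b =>
        rw [Finset.mem_coe, SimpleGraph.mem_edgeFinset, SimpleGraph.mem_edgeSet] at he
        have hadj : G.Adj a.val b.val := he
        have ha : A i a.val = true := by
          have := a.property
          simpa [hs] using this
        have hb : A i b.val = true := by
          have := b.property
          simpa [hs] using this
        simp only [Finset.mem_coe, Finset.mem_filter, SimpleGraph.mem_edgeFinset, SimpleGraph.mem_edgeSet,
          Sym2.map_pair_eq]
        refine ⟨hadj, ?_⟩
        intro w hw
        rw [Sym2.mem_iff] at hw
        rcases hw with rfl | rfl
        · exact ha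
        · exact hb
    · exact (Sym2.map.injective Subtype.val_injective).injOn
  -- double counting
  have key : ∑ e ∈ G.edgeFinset, (univ.filter (fun i => Q e i)).card
      = ∑ i : Fin n, (G.edgeFinset.filter (fun e => Q e i)).card := by
    simp only [Finset.card_filter]
    exact Finset.sum_comm
  have lhs : ∑ e ∈ G.edgeFinset, (univ.filter (fun i => Q e i)).card
      = G.edgeFinset.card * (d - 1) := by
    rw [Finset.sum_congr rfl claim1, Finset.sum_const, smul_eq_mul]
  have rhs : n * (d - 1) ≤ ∑ i : Fin n, (G.edgeFinset.filter (fun e => Q e i)).card := by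
    calc n * (d - 1) = ∑ _i : Fin n, (d - 1) := by
          rw [Finset.sum_const, Finset.card_univ, Fintype.card_fin, smul_eq_mul]
      _ ≤ _ := Finset.sum_le_sum (fun i _ => claim2 i)
  rw [← key, lhs] at rhs
  have hd1 : 0 < d - 1 := by omega
  have : n ≤ G.edgeFinset.card := Nat.le_of_mul_le_mul_right rhs hd1
  omega
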